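/- Let u(z) = (2/N) Σ_{λ ∈ Λ/±} cos 2π⟨λ,z⟩. For each fixed index k, ∫_{𝕋^d} (∂u/∂z_k)(z)⁴ dz ≤ C · E²/N for a constant C depending only on d. -/

import Mathlib

open Real Finset MeasureTheory

lemma exp1d (n : ℤ) :
    ∫ t in Set.Icc (0:ℝ) 1, Complex.exp (2*π*Complex.I*n*t) =
      if n = 0 then 1 else 0 := by
  rw [MeasureTheory.integral_Icc_eq_integral_Ioc,
    ← intervalIntegral.integral_of_le zero_le_one]
  by_cases hn : n = 0
  · simp [hn]
  · rw [if_neg hn]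
    have hc : (2*π*Complex.I*n : ℂ) ≠ 0 := by
      simp [Real.pi_ne_zero, Complex.I_ne_zero, hn, Complex.ofReal_ne_zero]
    have := integral_exp_mul_complex (a := 0) (b := 1) hc
    simp only [mul_comm (2*π*Complex.I*(n:ℂ)) _] at this ⊢
    rw [this]
    have : Complex.exp ((1:ℝ) * (2*π*Complex.I*n)) = 1 := by
      rw [Complex.ofReal_one, one_mul]
      have := Complex.exp_int_mul_two_pi_mul_I n
      rw [← this]; ring_nf
    rw [this]
    simp only [Complex.ofReal_zero, zero_mul, Complex.exp_zero]
    simp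

lemma cube_prod {d : ℕ} (f : Fin d → ℝ → ℂ) :
    ∫ z in (Set.univ.pi fun _ : Fin d => Set.Icc (0:ℝ) 1), ∏ i, f i (z i) =
      ∏ i, ∫ t in Set.Icc (0:ℝ) 1, f i t := by
  have hms : MeasurableSet (Set.univ.pi fun _ : Fin d => Set.Icc (0:ℝ) 1) :=
    MeasurableSet.univ_pi fun _ => measurableSet_Icc
  rw [← integral_indicator hms]
  have heq : (Set.univ.pi fun _ : Fin d => Set.Icc (0:ℝ) 1).indicator
      (fun z => ∏ i, f i (z i)) =
      fun z => ∏ i, (Set.Icc (0:ℝ) 1).indicator (f i) (z i) := by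
    funext z
    by_cases hz : z ∈ Set.univ.pi fun _ : Fin d => Set.Icc (0:ℝ) 1
    · rw [Set.indicator_of_mem hz]
      refine Finset.prod_congr rfl fun i _ => ?_
      rw [Set.indicator_of_mem (hz i (Set.mem_univ i))]
    · rw [Set.indicator_of_notMem hz]
      rw [Set.mem_univ_pi] at hz
      push_neg at hz
      obtain ⟨i, hi⟩ := hz
      exact (Finset.prod_eq_zero (Finset.mem_univ i)
        (by rw [Set.indicator_of_notMem hi])).symm
  rw [heq, MeasureTheory.integral_fintype_prod_volume_eq_prod (ι := Fin d)
    (fun i t => (Set.Icc (0:ℝ) 1).indicator (f i) t)]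
  exact Finset.prod_congr rfl fun i _ => integral_indicator measurableSet_Icc

lemma cos_cube {d : ℕ} (ν : Fin d → ℤ) :
    ∫ z in (Set.univ.pi fun _ : Fin d => Set.Icc (0:ℝ) 1),
      Real.cos (2*π*∑ i, (ν i : ℝ) * z i) = if ν = 0 then 1 else 0 := by
  have key : ∀ z : Fin d → ℝ, Real.cos (2*π*∑ i, (ν i:ℝ)*z i) =
      (∏ i, Complex.exp (2*π*Complex.I*(ν i : ℂ)*((z i : ℝ) : ℂ))).re := by
    intro z
    rw [← Complex.exp_sum]
    have h : (∑ i, 2*(π:ℂ)*Complex.I*(ν i : ℂ)*((z i : ℝ) : ℂ)) =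
        ((2*π*∑ i, (ν i:ℝ)*z i : ℝ) : ℂ) * Complex.I := by
      push_cast
      rw [Finset.mul_sum, Finset.sum_mul]
      exact Finset.sum_congr rfl fun i _ => by ring
    rw [h, Complex.exp_ofReal_mul_I_re]
  simp only [key]
  have hint : IntegrableOn
      (fun z : Fin d → ℝ => ∏ i, Complex.exp (2*π*Complex.I*(ν i : ℂ)*((z i : ℝ) : ℂ)))
      (Set.univ.pi fun _ : Fin d => Set.Icc (0:ℝ) 1) volume := by
    exact ContinuousOn.integrableOn_compact (isCompact_univ_pi fun _ => isCompact_Icc)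
      (Continuous.continuousOn (by fun_prop))
  have h2 := integral_re hint
  simp only [RCLike.re_to_complex] at h2
  rw [h2, cube_prod (fun i t => Complex.exp (2*π*Complex.I*(ν i : ℂ)*(t : ℂ)))]
  simp only [exp1d]
  by_cases hν : ν = 0
  · simp [hν]
  · rw [if_neg hν]
    obtain ⟨i, hi⟩ : ∃ i, ν i ≠ 0 := by
      by_contra h; push_neg at h; exact hν (funext h)
    rw [Finset.prod_eq_zero (Finset.mem_univ i) (by rw [if_neg hi])]
    simp

lemma sin_orth {d : ℕ} (lam mu : Fin d → ℤ) (h1 : lam + mu ≠ 0) :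
    ∫ z in (Set.univ.pi fun _ : Fin d => Set.Icc (0:ℝ) 1),
      Real.sin (2*π*∑ i, (lam i:ℝ)*z i) * Real.sin (2*π*∑ i, (mu i:ℝ)*z i)
      = if lam = mu then 1/2 else 0 := by
  have key : ∀ z : Fin d → ℝ,
      Real.sin (2*π*∑ i, (lam i:ℝ)*z i) * Real.sin (2*π*∑ i, (mu i:ℝ)*z i)
      = (Real.cos (2*π*∑ i, ((lam-mu) i:ℝ)*z i)
          - Real.cos (2*π*∑ i, ((lam+mu) i:ℝ)*z i))/2 := by
    intro z
    have ha : 2*π*∑ i, ((lam-mu) i:ℝ)*z i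
        = 2*π*∑ i, (lam i:ℝ)*z i - 2*π*∑ i, (mu i:ℝ)*z i := by
      simp only [Pi.sub_apply, Int.cast_sub, sub_mul, Finset.sum_sub_distrib, mul_sub]
    have hb : 2*π*∑ i, ((lam+mu) i:ℝ)*z i
        = 2*π*∑ i, (lam i:ℝ)*z i + 2*π*∑ i, (mu i:ℝ)*z i := by
      simp only [Pi.add_apply, Int.cast_add, add_mul, Finset.sum_add_distrib, mul_add]
    rw [ha, hb, Real.cos_sub, Real.cos_add]; ring
  simp only [key]
  have hcomp : IsCompact (Set.univ.pi fun _ : Fin d => Set.Icc (0:ℝ) 1) :=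
    isCompact_univ_pi fun _ => isCompact_Icc
  have hiA : IntegrableOn (fun z : Fin d → ℝ => Real.cos (2*π*∑ i, ((lam-mu) i:ℝ)*z i))
      (Set.univ.pi fun _ : Fin d => Set.Icc (0:ℝ) 1) volume :=
    ContinuousOn.integrableOn_compact hcomp (Continuous.continuousOn (by fun_prop))
  have hiB : IntegrableOn (fun z : Fin d → ℝ => Real.cos (2*π*∑ i, ((lam+mu) i:ℝ)*z i))
      (Set.univ.pi fun _ : Fin d => Set.Icc (0:ℝ) 1) volume :=
    ContinuousOn.integrableOn_compact hcomp (Continuous.continuousOn (by fun_prop))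
  rw [integral_div, integral_sub hiA hiB, cos_cube, cos_cube, if_neg h1, sub_zero]
  by_cases h : lam = mu
  · rw [if_pos (by rw [h, sub_self]), if_pos h]
  · rw [if_neg (fun hc => h (sub_eq_zero.mp hc)), if_neg h]
    norm_num

lemma fderiv_u {d : ℕ} (N : ℕ) (Λhalf : Finset (Fin d → ℤ)) (k : Fin d) (z : Fin d → ℝ) :
    fderiv ℝ (fun z : Fin d → ℝ => (2 / (N : ℝ)) *
        ∑ lam ∈ Λhalf, Real.cos (2 * π * ∑ i, (lam i : ℝ) * z i)) z (Pi.single k 1)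
      = -(4*π/N) * ∑ lam ∈ Λhalf, (lam k : ℝ) * Real.sin (2*π*∑ i, (lam i:ℝ)*z i) := by
  set L : (Fin d → ℤ) → ((Fin d → ℝ) →L[ℝ] ℝ) := fun lam =>
    (2*π) • ∑ i, (lam i : ℝ) • (ContinuousLinearMap.proj (R := ℝ) (φ := fun _ : Fin d => ℝ) i)
    with hL
  have hLapp : ∀ lam (w : Fin d → ℝ), L lam w = 2*π*∑ i, (lam i:ℝ)*w i := by
    intro lam w
    simp [hL, ContinuousLinearMap.sum_apply, Finset.mul_sum]
  have hinner : ∀ lam, HasFDerivAt (fun z : Fin d → ℝ => 2*π*∑ i, (lam i:ℝ)*z i) (L lam) z := by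
    intro lam
    have hfun : (fun z : Fin d → ℝ => 2*π*∑ i, (lam i:ℝ)*z i) = fun z => L lam z := by
      funext w; rw [hLapp]
    rw [hfun]
    exact (L lam).hasFDerivAt
  have hcos : ∀ lam, HasFDerivAt
      (fun z : Fin d → ℝ => Real.cos (2*π*∑ i, (lam i:ℝ)*z i))
      ((-Real.sin (2*π*∑ i, (lam i:ℝ)*z i)) • L lam) z := by
    intro lam
    exact (Real.hasDerivAt_cos _).comp_hasFDerivAt z (hinner lam)
  have hsum : HasFDerivAt
      (fun z : Fin d → ℝ => (2 / (N : ℝ)) * ∑ lam ∈ Λhalf, Real.cos (2*π*∑ i, (lam i:ℝ)*z i))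
      ((2 / (N : ℝ)) • ∑ lam ∈ Λhalf, (-Real.sin (2*π*∑ i, (lam i:ℝ)*z i)) • L lam) z :=
    (HasFDerivAt.fun_sum fun lam _ => hcos lam).const_mul _
  rw [hsum.fderiv]
  have hsingle : ∀ lam : Fin d → ℤ, L lam (Pi.single k 1) = 2*π*(lam k : ℝ) := by
    intro lam
    rw [hLapp]
    congr 1
    rw [Finset.sum_eq_single k (fun i _ hik => by simp [Pi.single_apply, hik])
      (fun h => absurd (Finset.mem_univ k) h)]
    simp
  simp only [ContinuousLinearMap.smul_apply, ContinuousLinearMap.sum_apply,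
    ContinuousLinearMap.coe_smul', Pi.smul_apply, hsingle, smul_eq_mul]
  rw [Finset.mul_sum, Finset.mul_sum]
  exact Finset.sum_congr rfl fun lam _ => by ring

/-- Fourth-moment bound for the first partials of the two-point function:
`∫_{𝕋^d} (∂u/∂z_k)⁴ dz ≤ C·E²/N`, with `C` depending only on `d`. -/
theorem stmt11 (d : ℕ) (hd : 1 ≤ d) :
    ∃ C : ℝ, 0 < C ∧
      ∀ (E : ℕ), 1 ≤ E →
      ∀ (Λ Λhalf : Finset (Fin d → ℤ)) (N : ℕ),
        (∀ lam : Fin d → ℤ, lam ∈ Λ ↔ ∑ i, (lam i)^2 = (E : ℤ)) →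
        Λ.Nonempty → N = Λ.card →
        Λhalf ⊆ Λ →
        (∀ lam ∈ Λ, (lam ∈ Λhalf ↔ -lam ∉ Λhalf)) →
        ∀ u : (Fin d → ℝ) → ℝ,
          (∀ z, u z = (2 / (N : ℝ)) *
            ∑ lam ∈ Λhalf, Real.cos (2 * π * ∑ i, (lam i : ℝ) * z i)) →
        ∀ k : Fin d,
          ∫ z in (Set.univ.pi fun _ : Fin d => Set.Icc (0 : ℝ) 1),
            (fderiv ℝ u z (Pi.single k 1))^4 ≤ C * (E : ℝ)^2 / N := by
  refine ⟨2^7 * π^4, by positivity, ?_⟩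
  intro E hE Λ Λhalf N hΛ hne hN hsub hsym u hu k
  set cube := Set.univ.pi fun _ : Fin d => Set.Icc (0:ℝ) 1 with hcube
  have hmeas : MeasurableSet cube := MeasurableSet.univ_pi fun _ => measurableSet_Icc
  have hcomp : IsCompact cube := isCompact_univ_pi fun _ => isCompact_Icc
  have hufun : u = fun z => (2 / (N:ℝ)) *
      ∑ lam ∈ Λhalf, Real.cos (2*π*∑ i, (lam i:ℝ)*z i) := funext hu
  set F : (Fin d → ℝ) → ℝ := fun z =>
    -(4*π/N) * ∑ lam ∈ Λhalf, (lam k:ℝ) * Real.sin (2*π*∑ i, (lam i:ℝ)*z i) with hF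
  have hderiv : ∀ z, fderiv ℝ u z (Pi.single k 1) = F z := by
    intro z; rw [hufun]; exact fderiv_u N Λhalf k z
  simp only [hderiv]
  -- basic facts
  have hN0 : 0 < N := hN ▸ Finset.card_pos.mpr hne
  have hNR : (0:ℝ) < N := by exact_mod_cast hN0
  have hcard : Λhalf.card ≤ N := hN ▸ Finset.card_le_card hsub
  have hlamE : ∀ lam ∈ Λhalf, ((lam k:ℝ))^2 ≤ E := by
    intro lam hlam
    have h1 : (lam k)^2 ≤ ∑ i, (lam i)^2 :=
      Finset.single_le_sum (f := fun i => (lam i)^2) (fun i _ => sq_nonneg _) (Finset.mem_univ k)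
    rw [(hΛ lam).mp (hsub hlam)] at h1
    exact_mod_cast h1
  have habs : ∀ lam ∈ Λhalf, |(lam k:ℝ)| ≤ Real.sqrt E := fun lam hlam =>
    Real.abs_le_sqrt (hlamE lam hlam)
  have hlamne : ∀ lam ∈ Λhalf, ∀ mu ∈ Λhalf, lam + mu ≠ 0 := by
    intro lam hlam mu hmu h0
    have hmueq : mu = -lam := by
      have := congrFun h0
      funext i; simpa [eq_neg_iff_add_eq_zero, add_comm] using this i
    exact ((hsym lam (hsub hlam)).mp hlam) (hmueq ▸ hmu)
  set M : ℝ := 4*π*Real.sqrt E with hM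
  have hsqE : (0:ℝ) ≤ Real.sqrt E := Real.sqrt_nonneg _
  have hbound : ∀ z, |F z| ≤ M := by
    intro z
    rw [hF]
    rw [abs_mul, abs_neg, abs_of_nonneg (by positivity : (0:ℝ) ≤ 4*π/N)]
    have h1 : |∑ lam ∈ Λhalf, (lam k:ℝ) * Real.sin (2*π*∑ i, (lam i:ℝ)*z i)|
        ≤ ∑ lam ∈ Λhalf, Real.sqrt E := by
      refine (Finset.abs_sum_le_sum_abs _ _).trans (Finset.sum_le_sum fun lam hlam => ?_)
      rw [abs_mul]
      calc |(lam k:ℝ)| * |Real.sin (2*π*∑ i, (lam i:ℝ)*z i)|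
          ≤ Real.sqrt E * 1 :=
            mul_le_mul (habs lam hlam) (Real.abs_sin_le_one _) (abs_nonneg _) hsqE
        _ = Real.sqrt E := mul_one _
    rw [Finset.sum_const, nsmul_eq_mul] at h1
    calc 4*π/N * |∑ lam ∈ Λhalf, (lam k:ℝ) * Real.sin (2*π*∑ i, (lam i:ℝ)*z i)|
        ≤ 4*π/N * ((Λhalf.card : ℝ) * Real.sqrt E) :=
          mul_le_mul_of_nonneg_left h1 (by positivity)
      _ ≤ 4*π/N * ((N:ℝ) * Real.sqrt E) := by
          apply mul_le_mul_of_nonneg_left _ (by positivity)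
          apply mul_le_mul_of_nonneg_right _ hsqE
          exact_mod_cast hcard
      _ = M := by rw [hM]; field_simp
  have hFcont : Continuous F := by
    rw [hF]; fun_prop
  -- pointwise bound F^4 ≤ M^2 F^2
  have hpt : ∀ z, (F z)^4 ≤ M^2 * (F z)^2 := by
    intro z
    have h2 : (F z)^2 ≤ M^2 := by
      have := hbound z
      nlinarith [abs_nonneg (F z), sq_abs (F z)]
    nlinarith [sq_nonneg (F z)]
  have hi4 : IntegrableOn (fun z => (F z)^4) cube volume :=
    ContinuousOn.integrableOn_compact hcomp ((hFcont.pow 4).continuousOn)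
  have hi2 : IntegrableOn (fun z => M^2 * (F z)^2) cube volume :=
    ContinuousOn.integrableOn_compact hcomp
      ((continuous_const.mul (hFcont.pow 2)).continuousOn)
  have step1 : ∫ z in cube, (F z)^4 ≤ ∫ z in cube, M^2 * (F z)^2 :=
    setIntegral_mono_on hi4 hi2 hmeas fun z _ => hpt z
  -- compute ∫ F²
  have hFsq : ∀ z, (F z)^2 = (4*π/N)^2 *
      ∑ lam ∈ Λhalf, ∑ mu ∈ Λhalf,
        ((lam k:ℝ)*(mu k:ℝ)) * (Real.sin (2*π*∑ i, (lam i:ℝ)*z i) *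
          Real.sin (2*π*∑ i, (mu i:ℝ)*z i)) := by
    intro z
    rw [hF]
    rw [mul_pow, sq (∑ lam ∈ Λhalf, (lam k:ℝ) * Real.sin (2*π*∑ i, (lam i:ℝ)*z i)),
      Finset.sum_mul_sum, show ((-(4*π/(N:ℝ)))^2) = (4*π/N)^2 by ring]
    congr 1
    exact Finset.sum_congr rfl fun lam _ => Finset.sum_congr rfl fun mu _ => by ring
  have hiterm : ∀ lam ∈ Λhalf, ∀ mu ∈ Λhalf, IntegrableOn
      (fun z : Fin d → ℝ => ((lam k:ℝ)*(mu k:ℝ)) * (Real.sin (2*π*∑ i, (lam i:ℝ)*z i) *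
        Real.sin (2*π*∑ i, (mu i:ℝ)*z i))) cube volume := by
    intro lam _ mu _
    exact ContinuousOn.integrableOn_compact hcomp (Continuous.continuousOn (by fun_prop))
  have step3 : ∫ z in cube, (F z)^2
      = (4*π/N)^2 * ∑ lam ∈ Λhalf, (lam k:ℝ)^2 * (1/2) := by
    simp only [hFsq]
    rw [integral_const_mul]
    congr 1
    rw [integral_finset_sum _ (fun lam hlam =>
      (integrable_finset_sum _ (fun mu hmu => hiterm lam hlam mu hmu)))]
    refine Finset.sum_congr rfl fun lam hlam => ?_
    rw [integral_finset_sum _ (fun mu hmu => hiterm lam hlam mu hmu)]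
    have hterm : ∀ mu ∈ Λhalf,
        (∫ z in cube, ((lam k:ℝ)*(mu k:ℝ)) * (Real.sin (2*π*∑ i, (lam i:ℝ)*z i) *
          Real.sin (2*π*∑ i, (mu i:ℝ)*z i)))
        = ((lam k:ℝ)*(mu k:ℝ)) * (if lam = mu then (1:ℝ)/2 else 0) := by
      intro mu hmu
      rw [integral_const_mul, sin_orth lam mu (hlamne lam hlam mu hmu)]
    rw [Finset.sum_congr rfl hterm]
    rw [Finset.sum_eq_single lam (fun mu _ hne' => by
        rw [if_neg (fun h => hne' h.symm), mul_zero])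
      (fun h => absurd hlam h)]
    rw [if_pos rfl]; ring
  -- final numeric chain
  have hQ : ∑ lam ∈ Λhalf, (lam k:ℝ)^2 * (1/2) ≤ (N:ℝ) * E / 2 := by
    calc ∑ lam ∈ Λhalf, (lam k:ℝ)^2 * (1/2)
        ≤ ∑ lam ∈ Λhalf, (E:ℝ) * (1/2) :=
          Finset.sum_le_sum fun lam hlam =>
            mul_le_mul_of_nonneg_right (hlamE lam hlam) (by norm_num)
      _ = (Λhalf.card : ℝ) * ((E:ℝ) * (1/2)) := by rw [Finset.sum_const, nsmul_eq_mul]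
      _ ≤ (N:ℝ) * ((E:ℝ) * (1/2)) := by
          apply mul_le_mul_of_nonneg_right _ (by positivity)
          exact_mod_cast hcard
      _ = (N:ℝ) * E / 2 := by ring
  have hM2 : M^2 = 16*π^2*E := by
    rw [hM, mul_pow, mul_pow, Real.sq_sqrt (by positivity : (0:ℝ) ≤ E)]
    ring
  calc ∫ z in cube, (F z)^4
      ≤ ∫ z in cube, M^2 * (F z)^2 := step1
    _ = M^2 * ∫ z in cube, (F z)^2 := integral_const_mul _ _
    _ = M^2 * ((4*π/N)^2 * ∑ lam ∈ Λhalf, (lam k:ℝ)^2 * (1/2)) := by rw [step3]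
    _ ≤ M^2 * ((4*π/N)^2 * ((N:ℝ) * E / 2)) := by
        apply mul_le_mul_of_nonneg_left _ (sq_nonneg M)
        exact mul_le_mul_of_nonneg_left hQ (sq_nonneg _)
    _ = 2^7 * π^4 * (E:ℝ)^2 / N := by
        rw [hM2]; field_simp; ring
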